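/- Let G be a weak framework for a matroid M and let C be a circuit of M. Then either (a) G[C] is a balanced cycle, or (b) G[C] is a connected graph of minimum degree at least two with |C| = |V(G[C])| + 1 containing no balanced cycle, or (c) G[C] is a vertex-disjoint union of non-balanced cycles. -/

import Mathlib

open Set Matroid
open scoped Classical

namespace QuasiGraphicPaper

universe u v

/-- A finite multigraph: a set `V` of vertices (in an ambient type `α`), a set `E` of
edges (in an ambient type `β`), and an incidence function assigning to each edge an
unordered pair of endpoints; loop-edges and parallel edges are allowed. -/
structure Graph (α : Type u) (β : Type v) where
  V : Set α
  E : Set β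
  ends : β → Sym2 α
  finV : V.Finite
  finE : E.Finite
  ends_mem : ∀ ⦃e⦄, e ∈ E → ∀ ⦃x⦄, x ∈ ends e → x ∈ V

namespace Graph

variable {α : Type u} {β : Type v}

/-- `e` is a loop-edge of `G` at the vertex `v`. -/
def IsLoopAt (G : Graph α β) (e : β) (v : α) : Prop :=
  e ∈ G.E ∧ G.ends e = Sym2.diag v

/-- `loops_G(v)`: the set of loop-edges of `G` at `v`. -/
def loopsAt (G : Graph α β) (v : α) : Set β := {e | G.IsLoopAt e v}

/-- Two vertices are adjacent if some edge of `G` has them as its two endpoints. -/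
def Adj (G : Graph α β) (u v : α) : Prop := ∃ e ∈ G.E, G.ends e = s(u, v)

/-- A graph is connected if any two of its vertices are joined by a walk.
(The graph with no vertices is connected.) -/
def Connected (G : Graph α β) : Prop :=
  ∀ u ∈ G.V, ∀ v ∈ G.V, Relation.ReflTransGen G.Adj u v

/-- Delete a set `X` of vertices: remove the vertices in `X` and all edges meeting `X`. -/
def deleteVertices (G : Graph α β) (X : Set α) : Graph α β where
  V := G.V \ X
  E := {e ∈ G.E | ∀ x ∈ G.ends e, x ∉ X}
  ends := G.ends
  finV := G.finV.subset diff_subset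
  finE := G.finE.subset (sep_subset _ _)
  ends_mem := fun e he x hx => ⟨G.ends_mem he.1 hx, he.2 x hx⟩

/-- `G − v`: delete the single vertex `v`. -/
abbrev deleteVertex (G : Graph α β) (v : α) : Graph α β := G.deleteVertices {v}

/-- `G − e`: delete the edge `e` (keeping all vertices). -/
def deleteEdge (G : Graph α β) (e : β) : Graph α β where
  V := G.V
  E := G.E \ {e}
  ends := G.ends
  finV := G.finV
  finE := G.finE.subset diff_subset
  ends_mem := fun f hf x hx => G.ends_mem hf.1 hx

/-- `G[X]`: the subgraph of `G` with edge set `X` (intersected with `E(G)`) and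
no isolated vertices. -/
def restrictEdges (G : Graph α β) (X : Set β) : Graph α β where
  V := {v | ∃ e ∈ X ∩ G.E, v ∈ G.ends e}
  E := X ∩ G.E
  ends := G.ends
  finV := G.finV.subset (by rintro v ⟨e, ⟨-, he⟩, hv⟩; exact G.ends_mem he hv)
  finE := G.finE.subset inter_subset_right
  ends_mem := fun e he x hx => ⟨e, he, hx⟩

/-- The connected component of `G` containing the vertex `v`, as a graph. -/
def componentOf (G : Graph α β) (v : α) : Graph α β where
  V := {u ∈ G.V | Relation.ReflTransGen G.Adj v u}
  E := {e ∈ G.E | ∀ x ∈ G.ends e, Relation.ReflTransGen G.Adj v x}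
  ends := G.ends
  finV := G.finV.subset (sep_subset _ _)
  finE := G.finE.subset (sep_subset _ _)
  ends_mem := fun e he x hx => ⟨G.ends_mem he.1 hx, he.2 x hx⟩

/-- `H` is a connected component of `G`. -/
def IsComponentOf (H G : Graph α β) : Prop := ∃ v ∈ G.V, H = G.componentOf v

/-- The number of connected components of `G`. -/
noncomputable def ncomponents (G : Graph α β) : ℕ :=
  {H : Graph α β | H.IsComponentOf G}.ncard

/-- `G` has at most two connected components: among any three vertices, two are joined. -/
def AtMostTwoComponents (G : Graph α β) : Prop :=
  ∀ u ∈ G.V, ∀ v ∈ G.V, ∀ w ∈ G.V,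
    Relation.ReflTransGen G.Adj u v ∨ Relation.ReflTransGen G.Adj u w ∨
      Relation.ReflTransGen G.Adj v w

/-- The degree of a vertex: loop-edges count twice. -/
noncomputable def degree (G : Graph α β) (v : α) : ℕ :=
  ({e ∈ G.E | v ∈ G.ends e ∧ ¬ (G.ends e).IsDiag}).ncard +
    2 * ({e ∈ G.E | G.ends e = Sym2.diag v}).ncard

/-- `G` is a cycle: it is connected, has at least one edge, and every vertex has
degree two. -/
def IsCycleGraph (G : Graph α β) : Prop :=
  G.E.Nonempty ∧ G.Connected ∧ ∀ v ∈ G.V, G.degree v = 2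

/-- `C` is (the edge set of) a cycle of `G`. -/
def CycleSet (G : Graph α β) (C : Set β) : Prop :=
  C ⊆ G.E ∧ (G.restrictEdges C).IsCycleGraph

/-- A forest: a graph with no cycles (in particular no loop-edges). -/
def IsForest (G : Graph α β) : Prop := ∀ C, ¬ G.CycleSet C

/-- `H` is a subgraph of `G`. -/
def IsSubgraph (H G : Graph α β) : Prop := H.V ⊆ G.V ∧ H.E ⊆ G.E ∧ H.ends = G.ends

/-- `G` is `k`-connected if `G − X` is connected for every vertex set `X` with `|X| < k`. -/
def KConnected (G : Graph α β) (k : ℕ) : Prop :=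
  ∀ X : Set α, X.encard < k → (G.deleteVertices X).Connected

/-- A theta: a `2`-connected graph with exactly two vertices of degree three, all
other vertices having degree two. -/
def IsTheta (H : Graph α β) : Prop :=
  H.KConnected 2 ∧
    ∃ a ∈ H.V, ∃ b ∈ H.V, a ≠ b ∧ H.degree a = 3 ∧ H.degree b = 3 ∧
      ∀ v ∈ H.V, v ≠ a → v ≠ b → H.degree v = 2

/-- `G / e`: contract the non-loop edge `e` with endpoints `x` and `y`
(identifying `y` with `x` and deleting `e`). -/
noncomputable def contractEdge (G : Graph α β) (e : β) (x y : α) (he : e ∈ G.E)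
    (hxy : G.ends e = s(x, y)) (hne : x ≠ y) : Graph α β where
  V := G.V \ {y}
  E := G.E \ {e}
  ends := fun f => (G.ends f).map (fun w => if w = y then x else w)
  finV := G.finV.subset diff_subset
  finE := G.finE.subset diff_subset
  ends_mem := by
    rintro f ⟨hf, -⟩ z hz
    rw [Sym2.mem_map] at hz
    obtain ⟨w, hw, rfl⟩ := hz
    by_cases hwy : w = y
    · rw [if_pos hwy]
      have hx : x ∈ G.ends e := by rw [hxy]; exact Sym2.mem_mk_left x y
      exact ⟨G.ends_mem he hx, by simp [hne]⟩
    · rw [if_neg hwy]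
      exact ⟨G.ends_mem hf hw, by simp [hwy]⟩

/-- `G ∘ e`: for a loop-edge `e` at a vertex `v` which is the unique loop-edge at `v`,
delete `v` and `e`, and replace every other edge `f = vw` at `v` by a loop-edge at `w`. -/
noncomputable def circ (G : Graph α β) (e : β) (v : α)
    (hno : ∀ f ∈ G.E, G.ends f = Sym2.diag v → f = e) : Graph α β where
  V := G.V \ {v}
  E := G.E \ {e}
  ends := fun f =>
    if h : f ∈ G.E ∧ f ≠ e ∧ v ∈ G.ends f then Sym2.diag (Sym2.Mem.other h.2.2)
    else G.ends f
  finV := G.finV.subset diff_subset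
  finE := G.finE.subset diff_subset
  ends_mem := by
    rintro f ⟨hf, hfe⟩ z hz
    have hfe' : f ≠ e := fun h' => hfe (by simp [h'])
    by_cases h : f ∈ G.E ∧ f ≠ e ∧ v ∈ G.ends f
    · rw [dif_pos h] at hz
      have hze : z = Sym2.Mem.other h.2.2 := by
        have h2 : z ∈ s(Sym2.Mem.other h.2.2, Sym2.Mem.other h.2.2) := hz
        rw [Sym2.mem_iff] at h2
        tauto
      subst hze
      refine ⟨G.ends_mem hf (Sym2.other_mem h.2.2), ?_⟩
      simp only [mem_singleton_iff]
      intro hzv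
      apply h.2.1
      apply hno f hf
      show G.ends f = s(v, v)
      rw [← Sym2.other_spec h.2.2, hzv]
    · rw [dif_neg h] at hz
      refine ⟨G.ends_mem hf hz, ?_⟩
      simp only [mem_singleton_iff]
      intro hzv
      subst hzv
      exact h ⟨hf, hfe', hz⟩

end Graph

/-! ### Matroid notions -/

variable {α : Type u} {β : Type v}

/-- The rank `r_M(X)` of a set `X` in a matroid `M`: the maximum size of an
independent subset of `X`. -/
noncomputable def rank (M : Matroid β) (X : Set β) : ℕ :=
  (⨆ I ∈ {I : Set β | M.Indep I ∧ I ⊆ X}, I.encard).toNat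

/-- `C` is a circuit of `M` : a minimal dependent set. -/
def IsCircuit (M : Matroid β) (C : Set β) : Prop :=
  M.Dep C ∧ ∀ D, D ⊂ C → M.Indep D

/-- `M \ D` : delete the set `D` from the matroid `M`. -/
def deleteM (M : Matroid β) (D : Set β) : Matroid β := M ↾ (M.E \ D)

/-- `M / C` : contract the set `C` in the matroid `M`. -/
def contractM (M : Matroid β) (C : Set β) : Matroid β := (M✶ ↾ (M✶.E \ C))✶

/-- `G` is a weak framework for `M`: conditions (1)–(3). -/
def WeakFramework (G : Graph α β) (M : Matroid β) : Prop :=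
  G.E = M.E ∧
  (∀ H : Graph α β, H.IsComponentOf G → rank M H.E ≤ H.V.ncard) ∧
  (∀ v ∈ G.V,
    M.closure (G.deleteVertex v).E ⊆ (G.deleteVertex v).E ∪ G.loopsAt v)

/-- `G` is a framework for `M`: conditions (1)–(4). -/
def Framework (G : Graph α β) (M : Matroid β) : Prop :=
  WeakFramework G M ∧
    ∀ C, IsCircuit M C → (G.restrictEdges C).AtMostTwoComponents

/-- `M` is the cycle matroid `M(G)` of `G` : the ground set of `M` is `E(G)`, and the
circuits of `M` are exactly the edge sets of cycles of `G`. -/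
def IsCycleMatroidOf (G : Graph α β) (M : Matroid β) : Prop :=
  M.E = G.E ∧ ∀ C, IsCircuit M C ↔ G.CycleSet C

/-- A matroid is graphic if it is the cycle matroid of some graph. -/
def Graphic (M : Matroid β) : Prop :=
  ∃ (γ : Type v) (G : Graph γ β), IsCycleMatroidOf G M

/-- A matroid is quasi-graphic if it has a framework. -/
def QuasiGraphic (M : Matroid β) : Prop :=
  ∃ (γ : Type v) (G : Graph γ β), Framework G M

/-- `M` is a lift of `N` if some single-element extension `M'` of `M` satisfies
`M' \ e = M` and `M' / e = N`. -/
def IsLiftOf (M N : Matroid β) : Prop :=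
  ∃ M' : Matroid (Option β), (none : Option β) ∈ M'.E ∧
    deleteM M' {none} = M.map some (Option.some_injective β).injOn ∧
    contractM M' {none} = N.map some (Option.some_injective β).injOn

/-- `M` is a lifted-graphic matroid: for some single-element extension `M'` of `M`,
`M' / e` is graphic. -/
def LiftedGraphic (M : Matroid β) : Prop :=
  ∃ M' : Matroid (Option β), (none : Option β) ∈ M'.E ∧
    deleteM M' {none} = M.map some (Option.some_injective β).injOn ∧
    Graphic (contractM M' {none})

/-- `(M, V)` is a framed matroid: `V` is a basis of `M` and every element of `M` is
spanned by a subset of `V` with at most two elements. -/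
def FramedMatroid {γ : Type u} (M : Matroid γ) (V : Set γ) : Prop :=
  M.IsBase V ∧ ∀ e ∈ M.E, ∃ S ⊆ V, S.ncard ≤ 2 ∧ e ∈ M.closure S

/-- `M` is a frame matroid: `M = M' \ V` for some framed matroid `(M', V)`. -/
def FrameMatroid (M : Matroid β) : Prop :=
  ∃ (γ : Type v) (M' : Matroid (β ⊕ γ)) (V : Set (β ⊕ γ)),
    FramedMatroid M' V ∧
      deleteM M' V = M.map Sum.inl Sum.inl_injective.injOn

/-- `M` is `3`-connected: it has no `k`-separation for `k ≤ 2`. -/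
def ThreeConnected (M : Matroid β) : Prop :=
  ∀ X ⊆ M.E, ∀ k : ℕ, k ≤ 2 → (k : ℕ∞) ≤ X.encard → (k : ℕ∞) ≤ (M.E \ X).encard →
    rank M M.E + k ≤ rank M X + rank M (M.E \ X)

/-- `M` is representable over some field. -/
def Representable (M : Matroid β) : Prop :=
  ∃ (F : Type v) (_ : Field F) (W : Type v) (_ : AddCommGroup W) (_ : Module F W)
    (φ : β → W), ∀ I ⊆ M.E, (M.Indep I ↔ LinearIndependent F (fun x : I => φ x))

/-- A collection `B` of cycles of `G` satisfies the theta-property if there is no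
theta-subgraph of `G` with exactly two of its three cycles in `B`. -/
def ThetaProperty (G : Graph α β) (B : Set (Set β)) : Prop :=
  ∀ H : Graph α β, H.IsSubgraph G → H.IsTheta →
    ∀ C1 C2 C3, H.CycleSet C1 → H.CycleSet C2 → H.CycleSet C3 →
      C1 ≠ C2 → C2 ≠ C3 → C1 ≠ C3 → C1 ∈ B → C2 ∈ B → C3 ∈ B

/-! ### Auxiliary lemmas for the proof of Statement 13 -/

section Aux

variable {α : Type u} {β : Type v}

lemma sym2_mem_exists (z : Sym2 α) : ∃ x, x ∈ z := by
  induction z using Sym2.ind with | _ a b => exact ⟨a, Sym2.mem_mk_left a b⟩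

lemma sym2_eq_of_ne_mem {z : Sym2 α} {u x : α} (hu : u ∈ z) (hx : x ∈ z) (h : u ≠ x) :
    z = s(u, x) := by
  induction z using Sym2.ind with
  | _ a b =>
    rw [Sym2.mem_iff] at hu hx
    rcases hu with rfl | rfl <;> rcases hx with rfl | rfl
    · exact absurd rfl h
    · rfl
    · exact Sym2.eq_swap
    · exact absurd rfl h

lemma sym2_exists_rep (z : Sym2 α) : ∃ a b, z = s(a, b) := by
  induction z using Sym2.ind with | _ a b => exact ⟨a, b, rfl⟩

lemma sym2_isDiag_eq {z : Sym2 α} (hz : z.IsDiag) {v : α} (hv : v ∈ z) : z = Sym2.diag v := by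
  induction z using Sym2.ind with
  | _ a b =>
    have hab : a = b := Sym2.mk_isDiag_iff.mp hz
    rw [Sym2.mem_iff] at hv
    rcases hv with rfl | rfl
    · rw [hab]; rfl
    · rw [hab]; rfl

namespace Graph

lemma ncard_sep_eq_filter (Γ : Graph α β) (p : β → Prop) :
    {e ∈ Γ.E | p e}.ncard = (Γ.finE.toFinset.filter p).card := by
  rw [← Set.ncard_coe_finset]
  congr 1
  ext e
  simp [Set.Finite.mem_toFinset]

lemma handshake (Γ : Graph α β) :
    ∑ v ∈ Γ.finV.toFinset, Γ.degree v = 2 * Γ.E.ncard := by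
  classical
  have hdeg : ∀ v, Γ.degree v =
      (Γ.finE.toFinset.filter fun e => v ∈ Γ.ends e ∧ ¬ (Γ.ends e).IsDiag).card
      + 2 * (Γ.finE.toFinset.filter fun e => Γ.ends e = Sym2.diag v).card := by
    intro v
    show {e ∈ Γ.E | v ∈ Γ.ends e ∧ ¬ (Γ.ends e).IsDiag}.ncard
        + 2 * {e ∈ Γ.E | Γ.ends e = Sym2.diag v}.ncard = _
    rw [ncard_sep_eq_filter, ncard_sep_eq_filter]
    congr
  have swap1 : ∑ v ∈ Γ.finV.toFinset,
      (Γ.finE.toFinset.filter fun e => v ∈ Γ.ends e ∧ ¬ (Γ.ends e).IsDiag).card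
      = ∑ e ∈ Γ.finE.toFinset,
        (Γ.finV.toFinset.filter fun v => v ∈ Γ.ends e ∧ ¬ (Γ.ends e).IsDiag).card := by
    simp only [Finset.card_filter]
    exact Finset.sum_comm
  have swap2 : ∑ v ∈ Γ.finV.toFinset,
      (Γ.finE.toFinset.filter fun e => Γ.ends e = Sym2.diag v).card
      = ∑ e ∈ Γ.finE.toFinset,
        (Γ.finV.toFinset.filter fun v => Γ.ends e = Sym2.diag v).card := by
    simp only [Finset.card_filter]
    exact Finset.sum_comm
  have h1 : ∀ e ∈ Γ.finE.toFinset,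
      (Γ.finV.toFinset.filter fun v => v ∈ Γ.ends e ∧ ¬ (Γ.ends e).IsDiag).card
      = if (Γ.ends e).IsDiag then 0 else 2 := by
    intro e he
    rw [Set.Finite.mem_toFinset] at he
    by_cases hd : (Γ.ends e).IsDiag
    · rw [if_pos hd, Finset.card_eq_zero, Finset.filter_eq_empty_iff]
      intro v _
      simp [hd]
    · rw [if_neg hd]
      obtain ⟨a, b, hab⟩ := sym2_exists_rep (Γ.ends e)
      have hne : a ≠ b := by
        intro hh; apply hd; rw [hab, Sym2.mk_isDiag_iff]; exact hh
      have hfa : (Γ.finV.toFinset.filter fun v => v ∈ Γ.ends e ∧ ¬ (Γ.ends e).IsDiag)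
          = {a, b} := by
        ext v
        simp only [Finset.mem_filter, Set.Finite.mem_toFinset, Finset.mem_insert,
          Finset.mem_singleton]
        constructor
        · rintro ⟨-, hv, -⟩
          rw [hab, Sym2.mem_iff] at hv
          exact hv
        · rintro (rfl | rfl)
          · exact ⟨Γ.ends_mem he (by rw [hab]; exact Sym2.mem_mk_left _ _),
              by rw [hab]; exact Sym2.mem_mk_left _ _, hd⟩
          · exact ⟨Γ.ends_mem he (by rw [hab]; exact Sym2.mem_mk_right _ _),
              by rw [hab]; exact Sym2.mem_mk_right _ _, hd⟩
      rw [hfa, Finset.card_pair hne]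
  have h2 : ∀ e ∈ Γ.finE.toFinset,
      (Γ.finV.toFinset.filter fun v => Γ.ends e = Sym2.diag v).card
      = if (Γ.ends e).IsDiag then 1 else 0 := by
    intro e he
    rw [Set.Finite.mem_toFinset] at he
    by_cases hd : (Γ.ends e).IsDiag
    · rw [if_pos hd]
      obtain ⟨a, ha⟩ := sym2_mem_exists (Γ.ends e)
      have hda : Γ.ends e = Sym2.diag a := sym2_isDiag_eq hd ha
      have : (Γ.finV.toFinset.filter fun v => Γ.ends e = Sym2.diag v) = {a} := by
        ext v
        simp only [Finset.mem_filter, Set.Finite.mem_toFinset, Finset.mem_singleton]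
        constructor
        · rintro ⟨-, hv⟩
          have : Sym2.diag a = Sym2.diag v := by rw [← hda, hv]
          have h3 : a ∈ Sym2.diag v := by rw [← this]; exact Sym2.mem_mk_left a a
          have := Sym2.mem_iff.mp h3
          tauto
        · rintro rfl
          exact ⟨Γ.ends_mem he ha, hda⟩
      rw [this, Finset.card_singleton]
    · rw [if_neg hd, Finset.card_eq_zero, Finset.filter_eq_empty_iff]
      intro v _ hv
      apply hd
      rw [hv]
      exact Sym2.diag_isDiag v
  calc ∑ v ∈ Γ.finV.toFinset, Γ.degree v
      = ∑ e ∈ Γ.finE.toFinset, ((if (Γ.ends e).IsDiag then 0 else 2)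
        + 2 * (if (Γ.ends e).IsDiag then 1 else 0)) := by
        simp only [hdeg, Finset.sum_add_distrib, ← Finset.mul_sum, swap1, swap2]
        rw [Finset.sum_congr rfl h1, Finset.sum_congr rfl h2]
    _ = ∑ e ∈ Γ.finE.toFinset, 2 := by
        apply Finset.sum_congr rfl
        intro e _
        by_cases hd : (Γ.ends e).IsDiag <;> simp [hd]
    _ = 2 * Γ.E.ncard := by
        rw [Finset.sum_const, smul_eq_mul, mul_comm, ← Set.ncard_coe_finset,
          Set.Finite.coe_toFinset]

lemma ncard_V_eq_card_toFinset (Γ : Graph α β) : Γ.V.ncard = Γ.finV.toFinset.card := by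
  rw [← Set.ncard_coe_finset, Set.Finite.coe_toFinset]

lemma V_ncard_le_E_ncard (Γ : Graph α β) (h : ∀ v ∈ Γ.V, 2 ≤ Γ.degree v) :
    Γ.V.ncard ≤ Γ.E.ncard := by
  have h1 : ∑ v ∈ Γ.finV.toFinset, 2 ≤ ∑ v ∈ Γ.finV.toFinset, Γ.degree v := by
    apply Finset.sum_le_sum
    intro v hv
    exact h v (Γ.finV.mem_toFinset.mp hv)
  rw [handshake, Finset.sum_const, smul_eq_mul, mul_comm, ← ncard_V_eq_card_toFinset] at h1
  omega

lemma degree_eq_two_of (Γ : Graph α β) (h : ∀ v ∈ Γ.V, 2 ≤ Γ.degree v)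
    (hle : Γ.E.ncard ≤ Γ.V.ncard) : ∀ v ∈ Γ.V, Γ.degree v = 2 := by
  by_contra hcon
  push_neg at hcon
  obtain ⟨v0, hv0, hne⟩ := hcon
  have hlt : ∑ v ∈ Γ.finV.toFinset, 2 < ∑ v ∈ Γ.finV.toFinset, Γ.degree v := by
    apply Finset.sum_lt_sum
    · intro v hv; exact h v (Γ.finV.mem_toFinset.mp hv)
    · exact ⟨v0, Γ.finV.mem_toFinset.mpr hv0,
        lt_of_le_of_ne (h v0 hv0) (Ne.symm hne)⟩
  rw [handshake, Finset.sum_const, smul_eq_mul, mul_comm, ← ncard_V_eq_card_toFinset] at hlt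
  omega

lemma isCycleGraph_card (Γ : Graph α β) (h : Γ.IsCycleGraph) : Γ.V.ncard = Γ.E.ncard := by
  obtain ⟨-, -, hdeg⟩ := h
  have h2 : ∑ v ∈ Γ.finV.toFinset, Γ.degree v = ∑ v ∈ Γ.finV.toFinset, 2 :=
    Finset.sum_congr rfl fun v hv => hdeg v (Γ.finV.mem_toFinset.mp hv)
  rw [handshake, Finset.sum_const, smul_eq_mul, mul_comm, ← ncard_V_eq_card_toFinset] at h2
  omega

end Graph

lemma ncard_le_rank {M : Matroid β} {J X : Set β} (hJ : M.Indep J) (hJX : J ⊆ X)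
    (hX : X.Finite) : J.ncard ≤ rank M X := by
  have h1 : J.encard ≤ ⨆ I ∈ {I : Set β | M.Indep I ∧ I ⊆ X}, I.encard :=
    le_iSup₂ (f := fun I (_ : I ∈ {I : Set β | M.Indep I ∧ I ⊆ X}) => I.encard) J ⟨hJ, hJX⟩
  have h2 : (⨆ I ∈ {I : Set β | M.Indep I ∧ I ⊆ X}, I.encard) ≤ X.encard :=
    iSup₂_le fun I hI => Set.encard_mono hI.2
  have h3 : (⨆ I ∈ {I : Set β | M.Indep I ∧ I ⊆ X}, I.encard) ≠ ⊤ :=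
    (lt_of_le_of_lt h2 hX.encard_lt_top).ne
  rw [Set.ncard_def]
  exact ENat.toNat_le_toNat h1 h3

lemma circuit_nonempty {M : Matroid β} {C : Set β} (hC : IsCircuit M C) : C.Nonempty := by
  rw [Set.nonempty_iff_ne_empty]
  rintro rfl
  exact hC.1.not_indep M.empty_indep

lemma circuit_diff_indep {M : Matroid β} {C : Set β} (hC : IsCircuit M C) {e : β} (he : e ∈ C) :
    M.Indep (C \ {e}) :=
  hC.2 _ (Set.sdiff_singleton_ssubset.mpr he)

lemma circuit_mem_closure_diff {M : Matroid β} {C : Set β} (hC : IsCircuit M C) {e : β}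
    (he : e ∈ C) : e ∈ M.closure (C \ {e}) := by
  by_contra hcl
  have hI := circuit_diff_indep hC he
  have hind : M.Indep (insert e (C \ {e})) := by
    rw [hI.insert_indep_iff]
    exact Or.inl ⟨hC.1.subset_ground he, hcl⟩
  rw [Set.insert_diff_singleton, Set.insert_eq_self.mpr he] at hind
  exact hC.1.not_indep hind

lemma not_mem_closure_of_avoid {G : Graph α β} {M : Matroid β} (h : WeakFramework G M)
    {v : α} (hv : v ∈ G.V) {f : β} (hvf : v ∈ G.ends f) (hnl : G.ends f ≠ Sym2.diag v)
    {X : Set β} (hX : ∀ e ∈ X, e ∈ G.E ∧ v ∉ G.ends e) : f ∉ M.closure X := by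
  intro hf
  have hXsub : X ⊆ (G.deleteVertex v).E := by
    intro e he
    refine ⟨(hX e he).1, fun x hx hxv => ?_⟩
    rw [Set.mem_singleton_iff] at hxv
    subst hxv
    exact (hX e he).2 hx
  have hm := h.2.2 v hv (M.closure_subset_closure hXsub hf)
  rcases hm with h1 | h2
  · exact h1.2 v hvf rfl
  · exact hnl h2.2

lemma circuit_min_degree {G : Graph α β} {M : Matroid β} (h : WeakFramework G M)
    {C : Set β} (hC : IsCircuit M C) :
    ∀ v ∈ (G.restrictEdges C).V, 2 ≤ (G.restrictEdges C).degree v := by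
  intro v hvV
  have hCE : C ⊆ G.E := by rw [h.1]; exact hC.1.subset_ground
  set R := G.restrictEdges C with hR
  set A := {e ∈ R.E | v ∈ R.ends e ∧ ¬ (R.ends e).IsDiag} with hA
  set B := {e ∈ R.E | R.ends e = Sym2.diag v} with hB
  have hdeg : R.degree v = A.ncard + 2 * B.ncard := rfl
  have hAfin : A.Finite := R.finE.subset (Set.sep_subset _ _)
  have hBfin : B.Finite := R.finE.subset (Set.sep_subset _ _)
  obtain ⟨e0, he0C, hv0⟩ := hvV
  by_cases hBne : B.Nonempty
  · have h1 := (Set.ncard_pos hBfin).mpr hBne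
    rw [hdeg]
    omega
  · rw [Set.not_nonempty_iff_eq_empty] at hBne
    have he0A : e0 ∈ A := by
      refine ⟨he0C, hv0, fun hd => ?_⟩
      have h2 : e0 ∈ B := ⟨he0C, sym2_isDiag_eq hd hv0⟩
      rw [hBne] at h2
      exact h2
    rw [hdeg, hBne, Set.ncard_empty]
    by_contra hlt
    push_neg at hlt
    have hA1 : A = {e0} := by
      rcases (Set.ncard_le_one_iff_eq hAfin).mp (by omega) with h' | ⟨a, h'⟩
      · rw [h'] at he0A; exact absurd he0A (Set.notMem_empty e0)
      · rw [h'] at he0A ⊢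
        rw [Set.mem_singleton_iff] at he0A
        rw [he0A]
    have he0C' : e0 ∈ C := he0C.1
    have hcl := circuit_mem_closure_diff hC he0C'
    refine not_mem_closure_of_avoid h (G.ends_mem (hCE he0C') hv0) hv0 ?_ ?_ hcl
    · intro hd
      have h2 : e0 ∈ B := ⟨he0C, hd⟩
      rw [hBne] at h2
      exact h2
    · intro e he
      refine ⟨hCE he.1, fun hvmem => ?_⟩
      by_cases hd : (G.ends e).IsDiag
      · have h2 : e ∈ B := ⟨⟨he.1, hCE he.1⟩, sym2_isDiag_eq hd hvmem⟩
        rw [hBne] at h2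
        exact h2
      · have h2 : e ∈ A := ⟨⟨he.1, hCE he.1⟩, hvmem, hd⟩
        rw [hA1] at h2
        exact he.2 h2

lemma srl {G : Graph α β} {M : Matroid β} (h : WeakFramework G M) {I : Set β}
    (hI : M.Indep I) {W : Set α} (hWV : W ⊆ G.V) {w : α} (hw : w ∈ W)
    (hreach : ∀ u ∈ W, Relation.ReflTransGen G.Adj w u)
    (hIe : ∀ e ∈ I, e ∈ G.E ∧ ∀ x ∈ G.ends e, x ∈ W) : I.ncard ≤ W.ncard := by
  classical
  set Rch := {u | u ∈ G.V ∧ Relation.ReflTransGen G.Adj w u} with hRch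
  have hWR : W ⊆ Rch := fun u hu => ⟨hWV hu, hreach u hu⟩
  have hRV : Rch ⊆ G.V := fun u hu => hu.1
  have hRfin : Rch.Finite := G.finV.subset hRV
  have key : ∀ k : ℕ, k ≤ (Rch \ W).ncard → ∃ S : Set α, W ⊆ S ∧ S ⊆ Rch ∧
      (S \ W).ncard = k ∧ ∃ J : Set β, M.Indep J ∧
      (∀ e ∈ J, e ∈ G.E ∧ ∀ x ∈ G.ends e, x ∈ S) ∧ J.ncard = I.ncard + k := by
    intro k
    induction k with
    | zero =>
      intro _
      exact ⟨W, Set.Subset.rfl, hWR, by simp, I, hI, hIe, by simp⟩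
    | succ k ih =>
      intro hk
      obtain ⟨S, hWS, hSR, hScard, J, hJind, hJe, hJcard⟩ := ih (by omega)
      have hSfin : S.Finite := hRfin.subset hSR
      have hex : ∃ z, z ∈ Rch ∧ z ∉ S := by
        by_contra hcon
        push_neg at hcon
        have hsub : Rch \ W ⊆ S \ W := fun u hu => ⟨hcon u hu.1, hu.2⟩
        have := Set.ncard_le_ncard hsub hSfin.diff
        omega
      obtain ⟨z, hzR, hzS⟩ := hex
      have cross : ∀ b, Relation.ReflTransGen G.Adj w b → b ∉ S →
          ∃ y x e, y ∈ S ∧ x ∉ S ∧ x ∈ Rch ∧ e ∈ G.E ∧ G.ends e = s(y, x) := by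
        intro b hb
        induction hb with
        | refl => exact fun hws => absurd (hWS hw) hws
        | @tail c d hwc hcd ihh =>
          intro hdS
          by_cases hcS : c ∈ S
          · obtain ⟨e, he, hends⟩ := hcd
            have hdV : d ∈ G.V :=
              G.ends_mem he (by rw [hends]; exact Sym2.mem_mk_right c d)
            exact ⟨c, d, e, hcS, hdS, ⟨hdV, hwc.tail ⟨e, he, hends⟩⟩, he, hends⟩
          · exact ihh hcS
      obtain ⟨y, x, e, hyS, hxS, hxR, heE, hends⟩ := cross z hzR.2 hzS
      have hyx : y ≠ x := fun hh => hxS (hh ▸ hyS)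
      have hxe : x ∈ G.ends e := by rw [hends]; exact Sym2.mem_mk_right y x
      have hnotcl : e ∉ M.closure J := by
        refine not_mem_closure_of_avoid h (hRV hxR) hxe ?_ ?_
        · rw [hends]
          intro hh
          rw [show Sym2.diag x = s(x, x) from rfl, Sym2.eq_iff] at hh
          rcases hh with ⟨h1, -⟩ | ⟨h1, -⟩ <;> exact hyx h1
        · intro f hf
          refine ⟨(hJe f hf).1, fun hxf => hxS ((hJe f hf).2 x hxf)⟩
      have heJ : e ∉ J := fun hh => hxS ((hJe e hh).2 x hxe)
      have hJfin : J.Finite := G.finE.subset fun f hf => (hJe f hf).1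
      have hJ'ind : M.Indep (insert e J) := by
        rw [hJind.insert_indep_iff]
        exact Or.inl ⟨h.1 ▸ heE, hnotcl⟩
      have hxW : x ∉ W := fun hh => hxS (hWS hh)
      have hxSW : x ∉ S \ W := fun hh => hxS hh.1
      refine ⟨insert x S, hWS.trans (Set.subset_insert x S),
        Set.insert_subset hxR hSR, ?_, insert e J, hJ'ind, ?_, ?_⟩
      · rw [Set.insert_diff_of_notMem _ hxW, Set.ncard_insert_of_notMem hxSW
          hSfin.diff]
        omega
      · intro f hf
        rcases hf with rfl | hf
        · refine ⟨heE, fun u hu => ?_⟩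
          rw [hends, Sym2.mem_iff] at hu
          rcases hu with rfl | rfl
          · exact Set.subset_insert _ S hyS
          · exact Set.mem_insert _ S
        · exact ⟨(hJe f hf).1, fun u hu => Set.subset_insert x S ((hJe f hf).2 u hu)⟩
      · rw [Set.ncard_insert_of_notMem heJ hJfin]
        omega
  obtain ⟨S, hWS, hSR, hScard, J, hJind, hJe, hJcard⟩ := key (Rch \ W).ncard le_rfl
  have hwV : w ∈ G.V := hWV hw
  have hJE : J ⊆ (G.componentOf w).E := by
    intro f hf
    refine ⟨(hJe f hf).1, fun u hu => (hSR ((hJe f hf).2 u hu)).2⟩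
  have hcomp : (G.componentOf w).IsComponentOf G := ⟨w, hwV, rfl⟩
  have hrank : rank M (G.componentOf w).E ≤ (G.componentOf w).V.ncard := h.2.1 _ hcomp
  have hJrank : J.ncard ≤ rank M (G.componentOf w).E :=
    ncard_le_rank hJind hJE (G.finE.subset (Set.sep_subset _ _))
  have hVcomp : (G.componentOf w).V = Rch := rfl
  have hWcard : (Rch \ W).ncard + W.ncard = Rch.ncard :=
    Set.ncard_diff_add_ncard_of_subset hWR hRfin
  rw [hVcomp] at hrank
  omega

lemma adj_symm {Γ : Graph α β} {u v : α} (h : Γ.Adj u v) : Γ.Adj v u := by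
  obtain ⟨e, he, h2⟩ := h
  exact ⟨e, he, by rw [h2, Sym2.eq_swap]⟩

lemma mem_componentOf_E {Γ : Graph α β} {v u : α} {e : β} (he : e ∈ Γ.E) (hu : u ∈ Γ.ends e)
    (hru : Relation.ReflTransGen Γ.Adj v u) : e ∈ (Γ.componentOf v).E := by
  refine ⟨he, fun x hx => ?_⟩
  by_cases hxu : x = u
  · subst hxu; exact hru
  · have hends : Γ.ends e = s(u, x) := sym2_eq_of_ne_mem hu hx (fun hh => hxu hh.symm)
    exact hru.tail ⟨e, he, hends⟩

lemma componentOf_degree {Γ : Graph α β} {v u : α} (hu : u ∈ (Γ.componentOf v).V) :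
    (Γ.componentOf v).degree u = Γ.degree u := by
  have hru : Relation.ReflTransGen Γ.Adj v u := hu.2
  have hsetA : {e ∈ (Γ.componentOf v).E | u ∈ Γ.ends e ∧ ¬(Γ.ends e).IsDiag}
      = {e ∈ Γ.E | u ∈ Γ.ends e ∧ ¬(Γ.ends e).IsDiag} := by
    ext e
    constructor
    · rintro ⟨heK, h2⟩; exact ⟨heK.1, h2⟩
    · rintro ⟨heE, h2⟩; exact ⟨mem_componentOf_E heE h2.1 hru, h2⟩
  have hsetB : {e ∈ (Γ.componentOf v).E | Γ.ends e = Sym2.diag u}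
      = {e ∈ Γ.E | Γ.ends e = Sym2.diag u} := by
    ext e
    constructor
    · rintro ⟨heK, h2⟩; exact ⟨heK.1, h2⟩
    · rintro ⟨heE, h2⟩
      refine ⟨mem_componentOf_E heE ?_ hru, h2⟩
      rw [h2]
      exact Sym2.mem_mk_left u u
  show {e ∈ (Γ.componentOf v).E | u ∈ Γ.ends e ∧ ¬(Γ.ends e).IsDiag}.ncard
      + 2 * {e ∈ (Γ.componentOf v).E | Γ.ends e = Sym2.diag u}.ncard
      = {e ∈ Γ.E | u ∈ Γ.ends e ∧ ¬(Γ.ends e).IsDiag}.ncard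
      + 2 * {e ∈ Γ.E | Γ.ends e = Sym2.diag u}.ncard
  rw [hsetA, hsetB]

lemma reach_lift {Γ : Graph α β} {v u : α} (hu : Relation.ReflTransGen Γ.Adj v u) :
    Relation.ReflTransGen (Γ.componentOf v).Adj v u := by
  induction hu with
  | refl => exact Relation.ReflTransGen.refl
  | @tail b c hvb hbc ih =>
    obtain ⟨e, he, hends⟩ := hbc
    have heK : e ∈ (Γ.componentOf v).E :=
      mem_componentOf_E he (by rw [hends]; exact Sym2.mem_mk_left b c) hvb
    exact ih.tail ⟨e, heK, hends⟩

lemma componentOf_connected {Γ : Graph α β} {v : α} : (Γ.componentOf v).Connected := by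
  intro u1 hu1 u2 hu2
  have hsym : Symmetric (Γ.componentOf v).Adj := fun a b hab => adj_symm hab
  have h1 := reach_lift (Γ := Γ) (v := v) hu1.2
  have h2 := reach_lift (Γ := Γ) (v := v) hu2.2
  exact (@Std.Symm.symm _ _ (@Relation.ReflTransGen.stdSymm _ _ ⟨fun a b hab => hsym hab⟩) _ _ h1).trans h2

end Aux

/-- Let `G` be a weak framework for a matroid `M` and let `C` be a
circuit of `M`. Then either (a) `G[C]` is a balanced cycle, or (b) `G[C]` is a connected
graph of minimum degree at least two with `|C| = |V(G[C])| + 1` containing no balanced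
cycle, or (c) `G[C]` is a vertex-disjoint union of non-balanced cycles. -/
theorem statement13 {α : Type u} {β : Type v} (G : Graph α β) (M : Matroid β)
    (h : WeakFramework G M) (C : Set β) (hC : IsCircuit M C) :
    (G.restrictEdges C).IsCycleGraph ∨
    ((G.restrictEdges C).Connected ∧
      (∀ v ∈ (G.restrictEdges C).V, 2 ≤ (G.restrictEdges C).degree v) ∧
      C.ncard = (G.restrictEdges C).V.ncard + 1 ∧
      ∀ D, (G.restrictEdges C).CycleSet D → ¬ IsCircuit M D) ∨
    (∀ H : Graph α β, H.IsComponentOf (G.restrictEdges C) →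
      H.IsCycleGraph ∧ ¬ IsCircuit M H.E) := by
  classical
  have hCE : C ⊆ G.E := by rw [h.1]; exact hC.1.subset_ground
  set R := G.restrictEdges C with hRdef
  have hREC : R.E = C := Set.inter_eq_self_of_subset_left hCE
  have hCfin : C.Finite := G.finE.subset hCE
  have hCne : C.Nonempty := circuit_nonempty hC
  have hmin : ∀ v ∈ R.V, 2 ≤ R.degree v := circuit_min_degree h hC
  have hVE : R.V.ncard ≤ R.E.ncard := Graph.V_ncard_le_E_ncard R hmin
  rw [hREC] at hVE
  have hRVG : R.V ⊆ G.V := by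
    rintro v ⟨e, he, hv⟩
    exact G.ends_mem he.2 hv
  have hadjRG : ∀ a b, R.Adj a b → G.Adj a b := by
    rintro a b ⟨e, he, hends⟩
    exact ⟨e, he.2, hends⟩
  have hsymR : Symmetric R.Adj := fun a b hab => adj_symm hab
  by_cases hconn : R.Connected
  · -- G[C] is connected
    obtain ⟨e0, he0⟩ := hCne
    obtain ⟨w, hwRV⟩ : ∃ w, w ∈ R.V := by
      obtain ⟨x, hx⟩ := sym2_mem_exists (G.ends e0)
      exact ⟨x, ⟨e0, ⟨he0, hCE he0⟩, hx⟩⟩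
    have hupper : C.ncard ≤ R.V.ncard + 1 := by
      have hIind := circuit_diff_indep hC he0
      have hsrl : (C \ {e0}).ncard ≤ R.V.ncard := by
        refine srl h hIind hRVG hwRV (fun u hu => ?_) (fun e he => ?_)
        · exact Relation.ReflTransGen.mono hadjRG _ _ (hconn w hwRV u hu)
        · exact ⟨hCE he.1, fun x hx => ⟨e, ⟨he.1, hCE he.1⟩, hx⟩⟩
      have hd : (C \ {e0}).ncard = C.ncard - 1 :=
        Set.ncard_diff_singleton_of_mem he0
      have hpos : 0 < C.ncard := (Set.ncard_pos hCfin).mpr ⟨e0, he0⟩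
      omega
    by_cases hcase : C.ncard = R.V.ncard
    · left
      exact ⟨by rw [hREC]; exact ⟨e0, he0⟩, hconn,
        Graph.degree_eq_two_of R hmin (by rw [hREC]; omega)⟩
    · right; left
      have hcount : C.ncard = R.V.ncard + 1 := by omega
      refine ⟨hconn, hmin, hcount, ?_⟩
      rintro D ⟨hDE, hDcyc⟩ hDcirc
      rw [hREC] at hDE
      by_cases hDC : D = C
      · subst hDC
        have hcard := Graph.isCycleGraph_card _ hDcyc
        have hQE : (R.restrictEdges D).E = D :=
          Set.inter_eq_self_of_subset_left (by rw [hREC])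
        have hQV : (R.restrictEdges D).V = R.V := by
          ext x
          constructor
          · rintro ⟨e, he, hx⟩
            exact ⟨e, he.2, hx⟩
          · rintro ⟨e, he, hx⟩
            exact ⟨e, ⟨he.1, he⟩, hx⟩
        rw [hQE, hQV] at hcard
        omega
      · exact hDcirc.1.not_indep (hC.2 D ⟨hDE, fun hsup => hDC (Set.Subset.antisymm hDE hsup)⟩)
  · -- G[C] is disconnected
    right; right
    intro H hH
    obtain ⟨v, hvRV, rfl⟩ := hH
    have hKEC : (R.componentOf v).E ⊆ C := fun e he => by
      rw [← hREC]; exact he.1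
    have hKne : (R.componentOf v).E ≠ C := by
      intro heq
      apply hconn
      intro u1 hu1 u2 hu2
      obtain ⟨e1, he1, hx1⟩ := hu1
      obtain ⟨e2, he2, hx2⟩ := hu2
      have he1K : e1 ∈ (R.componentOf v).E := by rw [heq]; exact he1.1
      have he2K : e2 ∈ (R.componentOf v).E := by rw [heq]; exact he2.1
      have hr1 : Relation.ReflTransGen R.Adj v u1 := he1K.2 u1 hx1
      have hr2 : Relation.ReflTransGen R.Adj v u2 := he2K.2 u2 hx2
      exact (@Std.Symm.symm _ _ (@Relation.ReflTransGen.stdSymm _ _ ⟨fun a b hab => hsymR hab⟩) _ _ hr1).trans hr2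
    have hKssub : (R.componentOf v).E ⊂ C := ⟨hKEC, fun hh => hKne (Set.Subset.antisymm hKEC hh)⟩
    have hKind : M.Indep (R.componentOf v).E := hC.2 _ hKssub
    have hvKV : v ∈ (R.componentOf v).V := ⟨hvRV, Relation.ReflTransGen.refl⟩
    have hminK : ∀ u ∈ (R.componentOf v).V, 2 ≤ (R.componentOf v).degree u := by
      intro u hu
      rw [componentOf_degree hu]
      exact hmin u hu.1
    have hle : (R.componentOf v).E.ncard ≤ (R.componentOf v).V.ncard := by
      refine srl h hKind (fun u hu => hRVG hu.1) hvKV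
        (fun u hu => Relation.ReflTransGen.mono hadjRG _ _ hu.2) (fun e he => ?_)
      refine ⟨he.1.2, fun x hx => ?_⟩
      exact (R.componentOf v).ends_mem he hx
    have hne : (R.componentOf v).E.Nonempty := by
      obtain ⟨e, he, hx⟩ := hvRV
      exact ⟨e, mem_componentOf_E he hx Relation.ReflTransGen.refl⟩
    refine ⟨⟨hne, componentOf_connected, Graph.degree_eq_two_of _ hminK hle⟩, ?_⟩
    intro hcirc
    exact hcirc.1.not_indep hKind


end QuasiGraphicPaper
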